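/- Let n ≥ 2, 0 < α ≤ β, and let f_1, …, f_n : ℝ → ℝ each belong to the class F(α,β). Then for every x ∈ ℝⁿ with x_i ≥ 0 for all i and ∑_{i=1}^n x_i = n, the expected change of the total cost under the departure of a uniformly chosen agent satisfies (1/n)·∑_{ℓ=1}^n ∑_{i ≠ ℓ} f_i( (1 − 1/n)·x_i + (1/n)·x_ℓ ) − ∑_{i=1}^n f_i(x_i) ≤ 2β − (3/2)α. -/

import Mathlib

/-- The class `F(α,β)`: differentiable, `α`-strongly convex (`x ↦ f x - (α/2)x²`
is convex), `β`-smooth (the derivative is `β`-Lipschitz), with `f(0) = 0` and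
`f'(0) = 0`. -/
def MemF (α β : ℝ) (f : ℝ → ℝ) : Prop :=
  Differentiable ℝ f ∧
  ConvexOn ℝ Set.univ (fun x => f x - α / 2 * x ^ 2) ∧
  (∀ x y : ℝ, |deriv f x - deriv f y| ≤ β * |x - y|) ∧
  f 0 = 0 ∧ deriv f 0 = 0

/-- Smoothness: one-sided Taylor bound with constant `β` (lossy factor 2). -/
lemma memF_taylor {α β : ℝ} {f : ℝ → ℝ} (hf : MemF α β f) (hβ : 0 ≤ β) (x y : ℝ) :
    f y ≤ f x + deriv f x * (y - x) + β * (y - x) ^ 2 := by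
  obtain ⟨hd, -, hlip, -, -⟩ := hf
  have hgd : ∀ t : ℝ, HasDerivAt (fun t => f t - deriv f x * t)
      (deriv f t - deriv f x) t := fun t => by
    have := (hd t).hasDerivAt.sub ((hasDerivAt_id' t).const_mul (deriv f x))
    rw [mul_one] at this
    exact this
  have hb : ∀ t ∈ Set.uIcc x y, ‖deriv f t - deriv f x‖ ≤ β * |y - x| := by
    intro t ht
    have h1 : |t - x| ≤ |y - x| := by
      rcases le_total x y with h | h
      · rw [Set.uIcc_of_le h] at ht
        rw [abs_of_nonneg (by linarith [ht.1]), abs_of_nonneg (by linarith)]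
        linarith [ht.2]
      · rw [Set.uIcc_of_ge h] at ht
        rw [abs_of_nonpos (by linarith [ht.2]), abs_of_nonpos (by linarith)]
        linarith [ht.1]
    calc ‖deriv f t - deriv f x‖ ≤ β * |t - x| := hlip t x
      _ ≤ β * |y - x| := by nlinarith [abs_nonneg (t - x)]
  have hmvt := Convex.norm_image_sub_le_of_norm_hasDerivWithin_le
      (f := fun t => f t - deriv f x * t) (f' := fun t => deriv f t - deriv f x)
      (s := Set.uIcc x y) (fun t _ => (hgd t).hasDerivWithinAt) hb
      (convex_uIcc x y) Set.left_mem_uIcc Set.right_mem_uIcc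
  have h2 : f y - deriv f x * y - (f x - deriv f x * x) ≤ β * |y - x| * |y - x| :=
    le_trans (le_abs_self _) (by simpa [Real.norm_eq_abs, abs_mul] using hmvt)
  have h3 : |y - x| * |y - x| = (y - x) ^ 2 := by
    rw [← abs_mul, abs_mul_self, sq]
  nlinarith [h2, h3]

/-- Strong convexity consequences at nonnegative points. -/
lemma memF_lower {α β : ℝ} {f : ℝ → ℝ} (hf : MemF α β f) {z : ℝ} (hz : 0 ≤ z) :
    α / 2 * z ^ 2 ≤ f z ∧ α * z ^ 2 ≤ deriv f z * z := by
  obtain ⟨hd, hconv, -, hf0, hf'0⟩ := hf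
  have hgd : ∀ t : ℝ, HasDerivAt (fun t => f t - α / 2 * t ^ 2)
      (deriv f t - α * t) t := fun t => by
    have : HasDerivAt (fun t => f t - α / 2 * t ^ 2) (deriv f t - α / 2 * (↑2 * t ^ (2 - 1))) t :=
      (hd t).hasDerivAt.sub ((hasDerivAt_pow 2 t).const_mul (α / 2))
    convert this using 1
    ring
  have hderiv : ∀ t : ℝ, deriv (fun t => f t - α / 2 * t ^ 2) t = deriv f t - α * t :=
    fun t => (hgd t).deriv
  rcases eq_or_lt_of_le hz with rfl | hz'
  · constructor <;> simp [hf0]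
  · have hdiff : ∀ t : ℝ, DifferentiableAt ℝ (fun t => f t - α / 2 * t ^ 2) t :=
      fun t => (hgd t).differentiableAt
    have h1 := hconv.deriv_le_slope (Set.mem_univ 0) (Set.mem_univ z) hz' (hdiff 0)
    have h2 := hconv.slope_le_deriv (Set.mem_univ 0) (Set.mem_univ z) hz' (hdiff z)
    rw [slope_def_field, hderiv] at h1 h2
    have hg0 : 0 ≤ (f z - α / 2 * z ^ 2) / z := by
      have : ((f z - α / 2 * z ^ 2) - (f 0 - α / 2 * 0 ^ 2)) / (z - 0)
          = (f z - α / 2 * z ^ 2) / z := by rw [hf0]; ring_nf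
      rw [this] at h1
      calc (0:ℝ) = deriv f 0 - α * 0 := by rw [hf'0]; ring
        _ ≤ _ := h1
    have hgz : 0 ≤ f z - α / 2 * z ^ 2 := by
      by_contra hneg
      push_neg at hneg
      have : (f z - α / 2 * z ^ 2) / z < 0 := div_neg_of_neg_of_pos hneg hz'
      linarith
    refine ⟨by linarith, ?_⟩
    have hgz2 : (f z - α / 2 * z ^ 2) / z ≤ deriv f z - α * z := by
      have : ((f z - α / 2 * z ^ 2) - (f 0 - α / 2 * 0 ^ 2)) / (z - 0)
          = (f z - α / 2 * z ^ 2) / z := by rw [hf0]; ring_nf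
      rwa [this] at h2
    have h4 : 0 ≤ deriv f z - α * z := le_trans hg0 hgz2
    nlinarith

set_option maxHeartbeats 1000000 in
/-- For local costs in `F(α,β)` and feasible `x ∈ Sₙ`, the
expected change of the total cost under the departure of a uniformly chosen
agent is at most `2β - (3/2)α`. -/
theorem stmt_11 (n : ℕ) (hn : 2 ≤ n) (α β : ℝ) (hα : 0 < α) (hαβ : α ≤ β)
    (f : Fin n → ℝ → ℝ) (hf : ∀ i, MemF α β (f i))
    (x : Fin n → ℝ) (hx : ∀ i, 0 ≤ x i) (hsum : ∑ i, x i = (n : ℝ)) :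
    (1 / (n : ℝ)) * (∑ ℓ, ∑ i ∈ Finset.univ.erase ℓ,
        f i ((1 - 1 / (n : ℝ)) * x i + (1 / (n : ℝ)) * x ℓ))
      - ∑ i, f i (x i)
      ≤ 2 * β - 3 / 2 * α := by
  have hβ : 0 < β := lt_of_lt_of_le hα hαβ
  set N : ℝ := (n : ℝ) with hN
  have hN2 : (2 : ℝ) ≤ N := by rw [hN]; exact_mod_cast hn
  have hN0 : 0 < N := by linarith
  set S2 : ℝ := ∑ i, x i ^ 2 with hS2
  set F : ℝ := ∑ i, f i (x i) with hF
  have hS2ub : S2 ≤ N ^ 2 := by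
    have h := Finset.sum_sq_le_sq_sum_of_nonneg (s := Finset.univ) (f := x)
      (fun i _ => hx i)
    rwa [hsum] at h
  have hS2lb : N ≤ S2 := by
    have h := sq_sum_le_card_mul_sum_sq (s := Finset.univ) (f := x)
    rw [hsum, Finset.card_univ, Fintype.card_fin] at h
    have h' : N ^ 2 ≤ N * S2 := by exact_mod_cast h
    nlinarith
  have hFlb : α / 2 * S2 ≤ F := by
    rw [hS2, hF, Finset.mul_sum]
    exact Finset.sum_le_sum fun i _ => (memF_lower (hf i) (hx i)).1
  -- key pointwise bound
  have key : ∀ i ℓ : Fin n, f i ((1 - 1 / N) * x i + (1 / N) * x ℓ) ≤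
      f i (x i) + (β * (x i * x ℓ) - α * x i ^ 2) / N + β * (x ℓ - x i) ^ 2 / N ^ 2 := by
    intro i ℓ
    have hA := memF_taylor (hf i) hβ.le (x i) ((1 - 1 / N) * x i + (1 / N) * x ℓ)
    have hyx : (1 - 1 / N) * x i + (1 / N) * x ℓ - x i = (x ℓ - x i) / N := by ring
    rw [hyx] at hA
    have hd1 : deriv (f i) (x i) ≤ β * x i := by
      have h := (hf i).2.2.1 (x i) 0
      rw [(hf i).2.2.2.2, sub_zero, sub_zero, abs_of_nonneg (hx i)] at h
      exact le_trans (le_abs_self _) h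
    have hd2 : α * x i ^ 2 ≤ deriv (f i) (x i) * x i := (memF_lower (hf i) (hx i)).2
    have h6 : deriv (f i) (x i) * (x ℓ - x i) ≤ β * (x i * x ℓ) - α * x i ^ 2 := by
      nlinarith [mul_le_mul_of_nonneg_right hd1 (hx ℓ)]
    have h7 := (div_le_div_iff_of_pos_right hN0).2 h6
    calc f i ((1 - 1 / N) * x i + (1 / N) * x ℓ)
        ≤ f i (x i) + deriv (f i) (x i) * ((x ℓ - x i) / N)
            + β * ((x ℓ - x i) / N) ^ 2 := hA
      _ = f i (x i) + deriv (f i) (x i) * (x ℓ - x i) / N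
            + β * (x ℓ - x i) ^ 2 / N ^ 2 := by rw [div_pow]; ring
      _ ≤ _ := by linarith
  -- linear sum helper
  have sum_lin : ∀ a b c : ℝ,
      ∑ i : Fin n, (f i (x i) + a * x i + b * x i ^ 2 + c) = F + a * N + b * S2 + c * N := by
    intro a b c
    rw [Finset.sum_add_distrib, Finset.sum_add_distrib, Finset.sum_add_distrib,
      ← Finset.mul_sum, ← Finset.mul_sum, hsum, Finset.sum_const, Finset.card_univ,
      Fintype.card_fin, nsmul_eq_mul, hF, hS2]
    ring
  have sum_lin2 : ∀ a b c : ℝ,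
      ∑ ℓ : Fin n, (a * x ℓ + b * x ℓ ^ 2 + c) = a * N + b * S2 + c * N := by
    intro a b c
    rw [Finset.sum_add_distrib, Finset.sum_add_distrib,
      ← Finset.mul_sum, ← Finset.mul_sum, hsum, Finset.sum_const, Finset.card_univ,
      Fintype.card_fin, nsmul_eq_mul, hS2]
    ring
  -- bound the double sum
  have hdouble : ∑ ℓ, ∑ i ∈ Finset.univ.erase ℓ,
      f i ((1 - 1 / N) * x i + (1 / N) * x ℓ)
      ≤ (β - 2 * β / N) * N + (β / N) * S2 + (F + (- α / N + β / N ^ 2) * S2) * N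
        - (F + ((β - α) / N) * S2) := by
    have step1 : ∀ ℓ : Fin n, ∑ i ∈ Finset.univ.erase ℓ,
        f i ((1 - 1 / N) * x i + (1 / N) * x ℓ)
        ≤ ∑ i ∈ Finset.univ.erase ℓ,
          (f i (x i) + (β * (x i * x ℓ) - α * x i ^ 2) / N + β * (x ℓ - x i) ^ 2 / N ^ 2) :=
      fun ℓ => Finset.sum_le_sum fun i _ => key i ℓ
    have step2 : ∀ ℓ : Fin n, ∑ i ∈ Finset.univ.erase ℓ,
        (f i (x i) + (β * (x i * x ℓ) - α * x i ^ 2) / N + β * (x ℓ - x i) ^ 2 / N ^ 2)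
        = (∑ i, (f i (x i) + (β * (x i * x ℓ) - α * x i ^ 2) / N
              + β * (x ℓ - x i) ^ 2 / N ^ 2))
          - (f ℓ (x ℓ) + (β * (x ℓ * x ℓ) - α * x ℓ ^ 2) / N
              + β * (x ℓ - x ℓ) ^ 2 / N ^ 2) := by
      intro ℓ
      have h := Finset.sum_erase_add Finset.univ
        (fun i => f i (x i) + (β * (x i * x ℓ) - α * x i ^ 2) / N
          + β * (x ℓ - x i) ^ 2 / N ^ 2) (Finset.mem_univ ℓ)
      linarith [h]
    have step3 : ∀ ℓ : Fin n, (∑ i, (f i (x i) + (β * (x i * x ℓ) - α * x i ^ 2) / N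
          + β * (x ℓ - x i) ^ 2 / N ^ 2))
        = (β - 2 * β / N) * x ℓ + (β / N) * x ℓ ^ 2 + (F + (- α / N + β / N ^ 2) * S2) := by
      intro ℓ
      have h1 : ∑ i, (f i (x i) + (β * (x i * x ℓ) - α * x i ^ 2) / N
            + β * (x ℓ - x i) ^ 2 / N ^ 2)
          = ∑ i, (f i (x i) + (β * x ℓ / N - 2 * β * x ℓ / N ^ 2) * x i
            + (- α / N + β / N ^ 2) * x i ^ 2 + β * x ℓ ^ 2 / N ^ 2) :=
        Finset.sum_congr rfl fun i _ => by ring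
      rw [h1, sum_lin]
      field_simp
      ring
    have step4 : ∑ ℓ : Fin n, (f ℓ (x ℓ) + (β * (x ℓ * x ℓ) - α * x ℓ ^ 2) / N
        + β * (x ℓ - x ℓ) ^ 2 / N ^ 2) = F + ((β - α) / N) * S2 := by
      have h1 : ∑ ℓ : Fin n, (f ℓ (x ℓ) + (β * (x ℓ * x ℓ) - α * x ℓ ^ 2) / N
            + β * (x ℓ - x ℓ) ^ 2 / N ^ 2)
          = ∑ ℓ : Fin n, (f ℓ (x ℓ) + 0 * x ℓ + ((β - α) / N) * x ℓ ^ 2 + 0) :=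
        Finset.sum_congr rfl fun ℓ _ => by ring
      rw [h1, sum_lin]
      ring
    calc ∑ ℓ, ∑ i ∈ Finset.univ.erase ℓ, f i ((1 - 1 / N) * x i + (1 / N) * x ℓ)
        ≤ ∑ ℓ : Fin n, ((∑ i, (f i (x i) + (β * (x i * x ℓ) - α * x i ^ 2) / N
              + β * (x ℓ - x i) ^ 2 / N ^ 2))
            - (f ℓ (x ℓ) + (β * (x ℓ * x ℓ) - α * x ℓ ^ 2) / N
              + β * (x ℓ - x ℓ) ^ 2 / N ^ 2)) := by
          refine Finset.sum_le_sum fun ℓ _ => ?_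
          rw [← step2 ℓ]
          exact step1 ℓ
      _ = (∑ ℓ : Fin n, ((β - 2 * β / N) * x ℓ + (β / N) * x ℓ ^ 2
            + (F + (- α / N + β / N ^ 2) * S2)))
          - ∑ ℓ : Fin n, (f ℓ (x ℓ) + (β * (x ℓ * x ℓ) - α * x ℓ ^ 2) / N
            + β * (x ℓ - x ℓ) ^ 2 / N ^ 2) := by
          rw [Finset.sum_sub_distrib]
          congr 1
          exact Finset.sum_congr rfl fun ℓ _ => step3 ℓ
      _ = _ := by rw [sum_lin2, step4]
  -- conclude
  have hmul : (1 / N) * (∑ ℓ, ∑ i ∈ Finset.univ.erase ℓ,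
        f i ((1 - 1 / N) * x i + (1 / N) * x ℓ))
      ≤ (1 / N) * ((β - 2 * β / N) * N + (β / N) * S2
          + (F + (- α / N + β / N ^ 2) * S2) * N - (F + ((β - α) / N) * S2)) :=
    mul_le_mul_of_nonneg_left hdouble (by positivity)
  have hfinal : (1 / N) * ((β - 2 * β / N) * N + (β / N) * S2
        + (F + (- α / N + β / N ^ 2) * S2) * N - (F + ((β - α) / N) * S2)) - F
      ≤ 2 * β - 3 / 2 * α := by
    have hNe : N ≠ 0 := hN0.ne'
    have heq : (1 / N) * ((β - 2 * β / N) * N + (β / N) * S2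
          + (F + (- α / N + β / N ^ 2) * S2) * N - (F + ((β - α) / N) * S2)) - F
        = (β * N ^ 2 - 2 * β * N + β * S2 + α * S2 - α * S2 * N - F * N) / N ^ 2 := by
      field_simp
      ring
    rw [heq, div_le_iff₀ (by positivity : (0:ℝ) < N ^ 2)]
    nlinarith [mul_nonneg (sub_nonneg.2 hαβ) (sub_nonneg.2 hS2ub),
      mul_nonneg (sub_nonneg.2 hαβ) hN0.le,
      mul_nonneg (mul_nonneg hα.le (sub_nonneg.2 hS2lb))
        (by linarith : (0:ℝ) ≤ 3 / 2 * N - 2),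
      mul_le_mul_of_nonneg_right hFlb hN0.le,
      mul_nonneg hα.le (sq_nonneg N)]
  linarith [hmul, hfinal]
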